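/- Let P₁ and P₂ be orthogonal projectors on a finite-dimensional complex Hilbert space, each fixing a unit vector |Ψ⟩ (P₁|Ψ⟩ = |Ψ⟩ = P₂|Ψ⟩), with ranks rank(P₁) ≥ 2 and rank(P₂) ≥ 2. Define P̄ᵢ = Pᵢ − |Ψ⟩⟨Ψ| and q = ‖P̄₁P̄₂P̄₁‖ (operator norm). Then for every p ∈ [0,1], the second largest eigenvalue of Ω = pP₁ + (1−p)P₂ satisfies λ₂(Ω) ≥ (1+√q)/2. -/

import Mathlib

open scoped Matrix.Norms.L2Operator
open Matrix

/-- The rank-one projector `|Ψ⟩⟨Ψ|`. -/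
def projVec {d : ℕ} (Ψ : Fin d → ℂ) : Matrix (Fin d) (Fin d) ℂ :=
  fun i j => Ψ i * star (Ψ j)

/-- The euclidean norm of a plain vector. -/
noncomputable def en {d : ℕ} (x : Fin d → ℂ) : ℝ :=
  ‖(WithLp.equiv 2 (Fin d → ℂ)).symm x‖

lemma EuclideanSpace.inner_piLp_equiv_symm {d : ℕ} (x y : Fin d → ℂ) :
    inner ℂ ((WithLp.equiv 2 (Fin d → ℂ)).symm x) ((WithLp.equiv 2 (Fin d → ℂ)).symm y) =
      star x ⬝ᵥ y := by
  rw [dotProduct_comm]; rfl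

lemma en_nonneg {d : ℕ} (x : Fin d → ℂ) : 0 ≤ en x := norm_nonneg _

lemma dot_self_eq {d : ℕ} (x : Fin d → ℂ) : star x ⬝ᵥ x = ((en x ^ 2 : ℝ) : ℂ) := by
  have h := inner_self_eq_norm_sq_to_K (𝕜 := ℂ) ((WithLp.equiv 2 (Fin d → ℂ)).symm x)
  rw [EuclideanSpace.inner_piLp_equiv_symm] at h
  rw [h]
  push_cast
  rfl

lemma abs_dot_le {d : ℕ} (x y : Fin d → ℂ) : ‖star x ⬝ᵥ y‖ ≤ en x * en y := by
  rw [← EuclideanSpace.inner_piLp_equiv_symm]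
  exact norm_inner_le_norm (𝕜 := ℂ) _ _

lemma dot_conj {d : ℕ} (x y : Fin d → ℂ) :
    star x ⬝ᵥ y = starRingEnd ℂ (star y ⬝ᵥ x) := by
  rw [← EuclideanSpace.inner_piLp_equiv_symm, ← EuclideanSpace.inner_piLp_equiv_symm,
    inner_conj_symm]

lemma en_mulVec_le {d : ℕ} (A : Matrix (Fin d) (Fin d) ℂ) (x : Fin d → ℂ) :
    en (A *ᵥ x) ≤ ‖A‖ * en x := by
  simpa [en] using Matrix.l2_opNorm_mulVec A ((WithLp.equiv 2 (Fin d → ℂ)).symm x)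

lemma opnorm_le {d : ℕ} (C : Matrix (Fin d) (Fin d) ℂ) (c : ℝ) (hc : 0 ≤ c)
    (h : ∀ x : Fin d → ℂ, en (C *ᵥ x) ≤ c * en x) : ‖C‖ ≤ c := by
  rw [Matrix.l2_opNorm_def]
  refine ContinuousLinearMap.opNorm_le_bound _ hc fun y => ?_
  have h2 := h (WithLp.equiv 2 (Fin d → ℂ) y)
  simpa [en, Matrix.toEuclideanLin_apply] using h2

lemma dot_fix {d : ℕ} {M : Matrix (Fin d) (Fin d) ℂ} (hM : Mᴴ = M) {u : Fin d → ℂ}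
    (hu : M *ᵥ u = u) (z : Fin d → ℂ) : star u ⬝ᵥ z = star u ⬝ᵥ (M *ᵥ z) := by
  conv_lhs => rw [← hu]
  rw [Matrix.star_mulVec, hM, ← Matrix.dotProduct_mulVec]

lemma proj_lower {d : ℕ} {M : Matrix (Fin d) (Fin d) ℂ} (hM : Mᴴ = M) {u : Fin d → ℂ}
    (hu : M *ᵥ u = u) (z : Fin d → ℂ) : ‖star u ⬝ᵥ z‖ ≤ en u * en (M *ᵥ z) := by
  rw [dot_fix hM hu z]
  exact abs_dot_le _ _

lemma dot_proj_self {d : ℕ} {M : Matrix (Fin d) (Fin d) ℂ} (hM : Mᴴ = M) (hMM : M * M = M)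
    (z : Fin d → ℂ) : star z ⬝ᵥ (M *ᵥ z) = ((en (M *ᵥ z) ^ 2 : ℝ) : ℂ) := by
  have h1 : star z ⬝ᵥ (M *ᵥ z) = star (M *ᵥ z) ⬝ᵥ (M *ᵥ z) := by
    rw [Matrix.star_mulVec, hM, ← Matrix.dotProduct_mulVec, Matrix.mulVec_mulVec, hMM]
  rw [h1, dot_self_eq]

lemma en_proj_le {d : ℕ} {M : Matrix (Fin d) (Fin d) ℂ} (hM : Mᴴ = M) (hMM : M * M = M)
    (z : Fin d → ℂ) : en (M *ᵥ z) ≤ en z := by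
  have h1 : en (M *ᵥ z) ^ 2 ≤ en z * en (M *ᵥ z) := by
    calc en (M *ᵥ z) ^ 2 = ‖((en (M *ᵥ z) ^ 2 : ℝ) : ℂ)‖ := by
          rw [Complex.norm_real]
          exact (Real.norm_of_nonneg (by positivity)).symm
      _ = ‖star z ⬝ᵥ (M *ᵥ z)‖ := by rw [dot_proj_self hM hMM]
      _ ≤ en z * en (M *ᵥ z) := abs_dot_le _ _
  rcases (en_nonneg (M *ᵥ z)).eq_or_lt' with h | h
  · rw [h]; exact en_nonneg z
  · nlinarith [h1, h]

lemma rank_projVec_le {d : ℕ} (Ψ : Fin d → ℂ) : (projVec Ψ).rank ≤ 1 := by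
  have h : projVec Ψ =
      (Matrix.of fun i (_ : Fin 1) => Ψ i) * (Matrix.of fun (_ : Fin 1) j => star (Ψ j)) := by
    ext i j
    simp [projVec, Matrix.mul_apply]
  rw [h]
  exact (Matrix.rank_mul_le_left _ _).trans ((Matrix.rank_le_card_width _).trans (by simp))

theorem stmt_0 {d : ℕ} (P₁ P₂ : Matrix (Fin d) (Fin d) ℂ) (Ψ : Fin d → ℂ)
    (hΨ : star Ψ ⬝ᵥ Ψ = 1)
    (h₁herm : P₁.IsHermitian) (h₁proj : P₁ * P₁ = P₁)
    (h₂herm : P₂.IsHermitian) (h₂proj : P₂ * P₂ = P₂)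
    (h₁fix : P₁.mulVec Ψ = Ψ) (h₂fix : P₂.mulVec Ψ = Ψ)
    (h₁rank : 2 ≤ P₁.rank) (h₂rank : 2 ≤ P₂.rank)
    (p : ℝ) (hp : p ∈ Set.Icc (0 : ℝ) 1) :
    (1 + Real.sqrt ‖(P₁ - projVec Ψ) * (P₂ - projVec Ψ) * (P₁ - projVec Ψ)‖) / 2 ≤
      ‖(p : ℂ) • P₁ + ((1 : ℂ) - p) • P₂ - projVec Ψ‖ := by
  obtain ⟨hp0, hp1⟩ := hp
  have hPeherm : (projVec Ψ)ᴴ = projVec Ψ := by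
    ext i j
    simp [projVec, Matrix.conjTranspose_apply, mul_comm]
  have hsum : ∑ k, star (Ψ k) * Ψ k = 1 := hΨ
  have hPmul : ∀ (P : Matrix (Fin d) (Fin d) ℂ), P.mulVec Ψ = Ψ → P * projVec Ψ = projVec Ψ := by
    intro P hfix
    ext i j
    simp only [Matrix.mul_apply, projVec]
    have h1 : ∀ k ∈ Finset.univ, P i k * (Ψ k * star (Ψ j)) = (P i k * Ψ k) * star (Ψ j) :=
      fun k _ => by ring
    rw [Finset.sum_congr rfl h1, ← Finset.sum_mul]
    have h2 := congrFun hfix i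
    simp only [Matrix.mulVec, dotProduct] at h2
    rw [h2]
  have hP₁Pe : P₁ * projVec Ψ = projVec Ψ := hPmul P₁ h₁fix
  have hP₂Pe : P₂ * projVec Ψ = projVec Ψ := hPmul P₂ h₂fix
  have hPeP₁ : projVec Ψ * P₁ = projVec Ψ := by
    have h := congrArg Matrix.conjTranspose hP₁Pe
    rwa [Matrix.conjTranspose_mul, hPeherm, h₁herm.eq] at h
  have hPeP₂ : projVec Ψ * P₂ = projVec Ψ := by
    have h := congrArg Matrix.conjTranspose hP₂Pe
    rwa [Matrix.conjTranspose_mul, hPeherm, h₂herm.eq] at h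
  have hPePe : projVec Ψ * projVec Ψ = projVec Ψ := by
    ext i j
    simp only [Matrix.mul_apply, projVec]
    have h1 : ∀ k ∈ Finset.univ,
        (Ψ i * star (Ψ k)) * (Ψ k * star (Ψ j)) = (Ψ i * star (Ψ j)) * (star (Ψ k) * Ψ k) :=
      fun k _ => by ring
    rw [Finset.sum_congr rfl h1, ← Finset.mul_sum, hsum, mul_one]
  set Q₁ : Matrix (Fin d) (Fin d) ℂ := P₁ - projVec Ψ with hQ₁def
  set Q₂ : Matrix (Fin d) (Fin d) ℂ := P₂ - projVec Ψ with hQ₂def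
  have hQ₁herm : Q₁ᴴ = Q₁ := by
    rw [hQ₁def, Matrix.conjTranspose_sub, h₁herm.eq, hPeherm]
  have hQ₂herm : Q₂ᴴ = Q₂ := by
    rw [hQ₂def, Matrix.conjTranspose_sub, h₂herm.eq, hPeherm]
  have hQ₁idem : Q₁ * Q₁ = Q₁ := by
    rw [hQ₁def, Matrix.sub_mul, Matrix.mul_sub, Matrix.mul_sub, h₁proj, hP₁Pe, hPeP₁, hPePe]
    abel
  have hQ₂idem : Q₂ * Q₂ = Q₂ := by
    rw [hQ₂def, Matrix.sub_mul, Matrix.mul_sub, Matrix.mul_sub, h₂proj, hP₂Pe, hPeP₂, hPePe]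
    abel
  set Ω : Matrix (Fin d) (Fin d) ℂ := (p : ℂ) • P₁ + ((1 : ℂ) - p) • P₂ - projVec Ψ with hΩdef
  set R : ℝ := ‖Ω‖ with hRdef
  have hΩ : Ω = (p : ℂ) • Q₁ + ((1 : ℂ) - (p : ℂ)) • Q₂ := by
    rw [hΩdef, hQ₁def, hQ₂def]
    ext i j
    simp only [Matrix.sub_apply, Matrix.add_apply, Matrix.smul_apply, smul_eq_mul]
    ring
  -- Rayleigh quotient bound
  have ray : ∀ z : Fin d → ℂ,
      p * (star z ⬝ᵥ (Q₁ *ᵥ z)).re + (1 - p) * (star z ⬝ᵥ (Q₂ *ᵥ z)).re ≤ R * en z ^ 2 := by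
    intro z
    have h1 : star z ⬝ᵥ (Ω *ᵥ z) =
        (p : ℂ) * (star z ⬝ᵥ (Q₁ *ᵥ z)) + ((1 : ℂ) - (p : ℂ)) * (star z ⬝ᵥ (Q₂ *ᵥ z)) := by
      rw [hΩ, Matrix.add_mulVec, Matrix.smul_mulVec, Matrix.smul_mulVec,
        dotProduct_add, dotProduct_smul, dotProduct_smul]
      simp [smul_eq_mul]
    have h2 : (star z ⬝ᵥ (Ω *ᵥ z)).re ≤ R * en z ^ 2 := by
      calc (star z ⬝ᵥ (Ω *ᵥ z)).re ≤ ‖star z ⬝ᵥ (Ω *ᵥ z)‖ :=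
            Complex.re_le_norm _
        _ ≤ en z * en (Ω *ᵥ z) := abs_dot_le _ _
        _ ≤ en z * (R * en z) :=
            mul_le_mul_of_nonneg_left (en_mulVec_le Ω z) (en_nonneg z)
        _ = R * en z ^ 2 := by ring
    rw [h1] at h2
    have h3 : ((p : ℂ) * (star z ⬝ᵥ (Q₁ *ᵥ z)) + ((1 : ℂ) - (p : ℂ)) * (star z ⬝ᵥ (Q₂ *ᵥ z))).re
        = p * (star z ⬝ᵥ (Q₁ *ᵥ z)).re + (1 - p) * (star z ⬝ᵥ (Q₂ *ᵥ z)).re := by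
      simp [Complex.add_re, Complex.mul_re, Complex.sub_re, Complex.sub_im]
    rw [h3] at h2
    exact h2
  clear_value R
  -- nonzero vectors in the ranges of Q₁, Q₂
  have hQne : ∀ (P : Matrix (Fin d) (Fin d) ℂ), 2 ≤ P.rank → P - projVec Ψ ≠ 0 := by
    intro P hr h0
    rw [sub_eq_zero] at h0
    rw [h0] at hr
    have := rank_projVec_le Ψ
    omega
  have hex : ∀ (M : Matrix (Fin d) (Fin d) ℂ), M ≠ 0 → ∃ y, M *ᵥ y ≠ 0 := by
    intro M hM
    by_contra h
    push_neg at h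
    apply hM
    ext i j
    have h2 := congrFun (h (Pi.single j 1)) i
    simpa [Matrix.mulVec_single] using h2
  have en_pos : ∀ x : Fin d → ℂ, x ≠ 0 → 0 < en x := by
    intro x hx
    rcases (en_nonneg x).eq_or_lt' with h | h
    · exfalso
      apply hx
      have h2 : (WithLp.equiv 2 (Fin d → ℂ)).symm x = 0 := by
        rw [← norm_eq_zero]; exact h
      exact (WithLp.equiv 2 (Fin d → ℂ)).symm.injective (by simpa using h2)
    · exact h
  -- part (a): p ≤ R and 1 - p ≤ R
  have fixbound : ∀ (t : ℝ), t ≤ 1 → ∀ (Q Q' : Matrix (Fin d) (Fin d) ℂ), Qᴴ = Q → Q * Q = Q → Q'ᴴ = Q' →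
      Q' * Q' = Q' → Q ≠ 0 →
      (∀ z : Fin d → ℂ,
        t * (star z ⬝ᵥ (Q *ᵥ z)).re + (1 - t) * (star z ⬝ᵥ (Q' *ᵥ z)).re ≤ R * en z ^ 2) →
      t ≤ R := by
    intro t ht1 Q Q' hQh hQi hQ'h hQ'i hQn hray
    obtain ⟨y, hy⟩ := hex Q hQn
    set w : Fin d → ℂ := Q *ᵥ y with hwdef
    have hQw : Q *ᵥ w = w := by rw [hwdef, Matrix.mulVec_mulVec, hQi]
    have hw0 : 0 < en w := en_pos w hy
    have h1 : (star w ⬝ᵥ (Q *ᵥ w)).re = en w ^ 2 := by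
      rw [hQw, dot_self_eq]; exact Complex.ofReal_re _
    have h2 : (star w ⬝ᵥ (Q' *ᵥ w)).re = en (Q' *ᵥ w) ^ 2 := by
      rw [dot_proj_self hQ'h hQ'i]; exact Complex.ofReal_re _
    have h3 := hray w
    rw [h1, h2] at h3
    nlinarith [sq_nonneg (en (Q' *ᵥ w)), hw0, mul_pos hw0 hw0, ht1]
  have hpR : p ≤ R := by
    refine fixbound p hp1 Q₁ Q₂ hQ₁herm hQ₁idem hQ₂herm hQ₂idem (hQne P₁ h₁rank) ray
  have h1pR : 1 - p ≤ R := by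
    refine fixbound (1 - p) (by linarith) Q₂ Q₁ hQ₂herm hQ₂idem hQ₁herm hQ₁idem (hQne P₂ h₂rank) ?_
    intro z
    have := ray z
    linarith [this]
  have hhalf : 1 / 2 ≤ R := by linarith
  -- the operator norm q and its square root
  have hq : Real.sqrt ‖Q₁ * Q₂ * Q₁‖ = ‖Q₂ * Q₁‖ := by
    have hC : Q₁ * Q₂ * Q₁ = (Q₂ * Q₁)ᴴ * (Q₂ * Q₁) := by
      rw [Matrix.conjTranspose_mul, hQ₁herm, hQ₂herm]
      rw [show Q₁ * Q₂ * (Q₂ * Q₁) = Q₁ * (Q₂ * Q₂) * Q₁ by noncomm_ring, hQ₂idem]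
    rw [hC, Matrix.l2_opNorm_conjTranspose_mul_self, Real.sqrt_mul_self (norm_nonneg _)]
  -- part (b): for every c below ‖Q₂ * Q₁‖ we have (1 + c)/2 ≤ R
  have hstep : ∀ c : ℝ, 0 ≤ c → c < ‖Q₂ * Q₁‖ → (1 + c) / 2 ≤ R := by
    intro c hc0 hclt
    have hex2 : ∃ x : Fin d → ℂ, c * en x < en ((Q₂ * Q₁) *ᵥ x) := by
      by_contra h
      push_neg at h
      exact absurd (opnorm_le _ c hc0 h) (not_le.mpr hclt)
    obtain ⟨x, hx⟩ := hex2
    set w : Fin d → ℂ := Q₁ *ᵥ x with hwdef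
    have hQw : Q₁ *ᵥ w = w := by rw [hwdef, Matrix.mulVec_mulVec, hQ₁idem]
    set v : Fin d → ℂ := Q₂ *ᵥ w with hvdef
    have hQv : Q₂ *ᵥ v = v := by rw [hvdef, Matrix.mulVec_mulVec, hQ₂idem]
    have hvx : (Q₂ * Q₁) *ᵥ x = v := by rw [hvdef, hwdef, Matrix.mulVec_mulVec]
    rw [hvx] at hx
    set a : ℝ := en w with hadef
    set b : ℝ := en v with hbdef
    have hba : b ≤ a := by
      rw [hadef, hbdef, hvdef]
      exact en_proj_le hQ₂herm hQ₂idem w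
    have han : a ≤ en x := by
      rw [hadef, hwdef]
      exact en_proj_le hQ₁herm hQ₁idem x
    have hb0 : 0 < b := lt_of_le_of_lt (mul_nonneg hc0 (en_nonneg x)) hx
    have ha0 : 0 < a := lt_of_lt_of_le hb0 hba
    have hca : c * a < b := lt_of_le_of_lt (mul_le_mul_of_nonneg_left han hc0) hx
    set z : Fin d → ℂ := (b : ℂ) • w + (a : ℂ) • v with hzdef
    have hww : star w ⬝ᵥ w = ((a ^ 2 : ℝ) : ℂ) := dot_self_eq w
    have hwv : star w ⬝ᵥ v = ((b ^ 2 : ℝ) : ℂ) := by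
      rw [hvdef, dot_proj_self hQ₂herm hQ₂idem w, ← hvdef]
    have hvw : star v ⬝ᵥ w = ((b ^ 2 : ℝ) : ℂ) := by
      rw [dot_conj, hwv, Complex.conj_ofReal]
    have hvv : star v ⬝ᵥ v = ((b ^ 2 : ℝ) : ℂ) := dot_self_eq v
    have hwz : star w ⬝ᵥ z = ((a * b * (a + b) : ℝ) : ℂ) := by
      rw [hzdef, dotProduct_add, dotProduct_smul, dotProduct_smul,
        hww, hwv]
      simp only [smul_eq_mul]
      push_cast
      ring
    have hvz : star v ⬝ᵥ z = ((b ^ 2 * (a + b) : ℝ) : ℂ) := by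
      rw [hzdef, dotProduct_add, dotProduct_smul, dotProduct_smul,
        hvw, hvv]
      simp only [smul_eq_mul]
      push_cast
      ring
    have hzz : star z ⬝ᵥ z = ((2 * a ^ 2 * b ^ 2 + 2 * a * b ^ 3 : ℝ) : ℂ) := by
      rw [hzdef]
      simp only [star_add, star_smul, add_dotProduct, smul_dotProduct,
        dotProduct_add, dotProduct_smul, smul_eq_mul, hww, hwv, hvw, hvv,
        RCLike.star_def, Complex.conj_ofReal]
      push_cast
      ring
    have henz : en z ^ 2 = 2 * a ^ 2 * b ^ 2 + 2 * a * b ^ 3 := by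
      have h := dot_self_eq z
      rw [hzz] at h
      exact_mod_cast congrArg Complex.re h.symm
    set r₁ : ℝ := en (Q₁ *ᵥ z) with hr₁def
    set r₂ : ℝ := en (Q₂ *ᵥ z) with hr₂def
    have hW : a * b * (a + b) ≤ a * r₁ := by
      have h := proj_lower hQ₁herm hQw z
      rw [hwz] at h
      rw [Complex.norm_real,
        Real.norm_of_nonneg (mul_nonneg (mul_nonneg ha0.le hb0.le) (by linarith))] at h
      exact h
    have hV : b ^ 2 * (a + b) ≤ b * r₂ := by
      have h := proj_lower hQ₂herm hQv z
      rw [hvz] at h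
      rw [Complex.norm_real,
        Real.norm_of_nonneg (mul_nonneg (sq_nonneg b) (by linarith))] at h
      exact h
    have hq₁ : (star z ⬝ᵥ (Q₁ *ᵥ z)).re = r₁ ^ 2 := by
      rw [dot_proj_self hQ₁herm hQ₁idem]; exact Complex.ofReal_re _
    have hq₂ : (star z ⬝ᵥ (Q₂ *ᵥ z)).re = r₂ ^ 2 := by
      rw [dot_proj_self hQ₂herm hQ₂idem]; exact Complex.ofReal_re _
    have hRay := ray z
    rw [hq₁, hq₂, henz] at hRay
    have hr₁0 : 0 ≤ r₁ := en_nonneg _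
    have hr₂0 : 0 ≤ r₂ := en_nonneg _
    clear_value a b r₁ r₂
    have hr₁' : b * (a + b) ≤ r₁ := by
      have h : a * (b * (a + b)) ≤ a * r₁ := by
        rw [show a * (b * (a + b)) = a * b * (a + b) by ring]; exact hW
      exact le_of_mul_le_mul_left h ha0
    have hr₂' : b * (a + b) ≤ r₂ := by
      have h : b * (b * (a + b)) ≤ b * r₂ := by
        rw [show b * (b * (a + b)) = b ^ 2 * (a + b) by ring]; exact hV
      exact le_of_mul_le_mul_left h hb0
    have hab0 : (0:ℝ) ≤ b * (a + b) := mul_nonneg hb0.le (by linarith)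
    have hsq₁ : (b * (a + b)) ^ 2 ≤ r₁ ^ 2 := pow_le_pow_left₀ hab0 hr₁' 2
    have hsq₂ : (b * (a + b)) ^ 2 ≤ r₂ ^ 2 := pow_le_pow_left₀ hab0 hr₂' 2
    have hkey : b ^ 2 * (a + b) ^ 2 ≤ R * (2 * a ^ 2 * b ^ 2 + 2 * a * b ^ 3) := by
      have e1 : b ^ 2 * (a + b) ^ 2 = p * (b * (a + b)) ^ 2 + (1 - p) * (b * (a + b)) ^ 2 := by
        ring
      have e2 : p * (b * (a + b)) ^ 2 ≤ p * r₁ ^ 2 := mul_le_mul_of_nonneg_left hsq₁ hp0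
      have e3 : (1 - p) * (b * (a + b)) ^ 2 ≤ (1 - p) * r₂ ^ 2 :=
        mul_le_mul_of_nonneg_left hsq₂ (by linarith only [hp1])
      linarith only [hRay, e1, e2, e3]
    have hpos : (0 : ℝ) < b ^ 2 * (a + b) := mul_pos (pow_pos hb0 2) (by linarith)
    have h3 : a + b ≤ 2 * R * a := by
      have h := hkey
      rw [show R * (2 * a ^ 2 * b ^ 2 + 2 * a * b ^ 3) = (2 * R * a) * (b ^ 2 * (a + b)) by ring,
        show b ^ 2 * (a + b) ^ 2 = (a + b) * (b ^ 2 * (a + b)) by ring] at h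
      exact le_of_mul_le_mul_right h hpos
    by_contra hcon
    push_neg at hcon
    have h4 : 2 * R * a < (1 + c) * a :=
      mul_lt_mul_of_pos_right (by linarith only [hcon]) ha0
    linarith only [h3, h4, hca]
  -- conclude
  rw [hq]
  by_contra hcon
  push_neg at hcon
  have h2R1 : 0 ≤ 2 * R - 1 := by linarith
  have hClt : 2 * R - 1 < ‖Q₂ * Q₁‖ := by linarith
  have hcc0 : 0 ≤ (2 * R - 1 + ‖Q₂ * Q₁‖) / 2 := by
    have := norm_nonneg (Q₂ * Q₁)
    linarith
  have hcclt : (2 * R - 1 + ‖Q₂ * Q₁‖) / 2 < ‖Q₂ * Q₁‖ := by linarith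
  have := hstep _ hcc0 hcclt
  linarith
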